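/- Let R be a commutative ring, f : A' → B' and g : B → B' homomorphisms of R-algebras with A = A' ×_{B'} B their fiber product. Assume B' is flat as an R-module and the map B × A' → B', (b, a') ↦ g(b) − f(a'), is surjective. Then for any R-algebra S, the natural map A ⊗_R S → (A' ⊗_R S) ×_{B' ⊗_R S} (B ⊗_R S) is an isomorphism. -/

import Mathlib

open TensorProduct

section Purity

variable {R : Type*} [CommRing R] {K M N S : Type*}
  [AddCommGroup K] [AddCommGroup M] [AddCommGroup N] [AddCommGroup S]
  [Module R K] [Module R M] [Module R N] [Module R S]

/-- The transpose of a linear map into a character module. -/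
noncomputable def CharacterModule.transpose (φ : K →ₗ[R] CharacterModule S) :
    S →ₗ[R] CharacterModule K where
  toFun a := AddMonoidHom.mk' (fun k => φ k a) (fun k k' => by
    show φ (k + k') a = φ k a + φ k' a
    rw [map_add]
    rfl)
  map_add' a b := CharacterModule.ext _ fun k => map_add (φ k) a b
  map_smul' r a := CharacterModule.ext _ fun k => by
    have h1 : φ (r • k) a = φ k (r • a) := by rw [map_smul]; rfl
    exact h1.symm

@[simp] lemma CharacterModule.transpose_apply (φ : K →ₗ[R] CharacterModule S) (a : S) (k : K) :
    CharacterModule.transpose φ a k = φ k a := rfl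

/-- Purity: an exact sequence `0 → K → M → N → 0` with `N` flat stays left-exact
after tensoring with any module `S`. -/
theorem rTensor_injective_of_flat_cokernel
    (i : K →ₗ[R] M) (q : M →ₗ[R] N) (hi : Function.Injective i)
    (hq : Function.Surjective q) (hexact : Function.Exact i q) [Module.Flat R N] :
    Function.Injective (i.rTensor S) := by
  rw [rTensor_injective_iff_lcomp_surjective]
  set di := CharacterModule.dual (R := R) i with hdi_def
  set dq := CharacterModule.dual (R := R) q with hdq_def
  have hdi : Function.Surjective di := CharacterModule.dual_surjective_of_injective i hi
  have hdq_inj : Function.Injective dq := by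
    intro c c' h
    ext n
    obtain ⟨m, rfl⟩ := hq n
    exact DFunLike.congr_fun h m
  -- exactness of the dual sequence at `CharacterModule M`
  have hdual_exact : ∀ c : CharacterModule M, di c = 0 → ∃ x : CharacterModule N, dq x = c := by
    intro c hc
    have hker : ∀ m : M, q m = 0 → c m = 0 := by
      intro m hm
      obtain ⟨k, rfl⟩ := (hexact m).mp hm
      have : di c k = 0 := by rw [hc]; rfl
      exact this
    refine ⟨AddMonoidHom.mk' (fun n => c (Function.surjInv hq n)) ?_, ?_⟩
    · intro a b
      have h0 : q (Function.surjInv hq (a + b) - Function.surjInv hq a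
          - Function.surjInv hq b) = 0 := by
        simp [map_sub, Function.surjInv_eq hq]
      have := hker _ h0
      rw [map_sub, map_sub, sub_sub, sub_eq_zero] at this
      exact this
    · ext m
      show c (Function.surjInv hq (q m)) = c m
      have h0 : q (Function.surjInv hq (q m) - m) = 0 := by
        simp [map_sub, Function.surjInv_eq hq]
      have := hker _ h0
      rwa [map_sub, sub_eq_zero] at this
  -- a retraction of `dq`, using that the character module of the flat module `N` is Baer
  obtain ⟨ρ, hρ⟩ := (Module.Flat.iff_characterModule_baer.mp
    (inferInstance : Module.Flat R N)).extension_property dq hdq_inj LinearMap.id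
  -- a linear section `s` of `di`
  have hπ : LinearMap.ker di ≤ LinearMap.ker (LinearMap.id - dq ∘ₗ ρ) := by
    intro c hc
    rw [LinearMap.mem_ker] at hc ⊢
    obtain ⟨x, rfl⟩ := hdual_exact c hc
    have hx : ρ (dq x) = x := DFunLike.congr_fun hρ x
    simp [LinearMap.sub_apply, hx]
  set s : CharacterModule K →ₗ[R] CharacterModule M :=
    (Submodule.liftQ _ (LinearMap.id - dq ∘ₗ ρ) hπ) ∘ₗ
      (di.quotKerEquivOfSurjective hdi).symm.toLinearMap with hs_def
  have hdidq : ∀ x : CharacterModule N, di (dq x) = 0 := by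
    intro x
    ext k
    show x (q (i k)) = 0
    rw [hexact.apply_apply_eq_zero k, map_zero]
  have hs : ∀ c, di (s c) = c := by
    intro c
    obtain ⟨m, rfl⟩ := hdi c
    have hm : (di.quotKerEquivOfSurjective hdi).symm (di m) = Submodule.Quotient.mk m := by
      apply (di.quotKerEquivOfSurjective hdi).injective
      rw [LinearEquiv.apply_symm_apply]
      rfl
    show di ((Submodule.liftQ _ _ hπ) ((di.quotKerEquivOfSurjective hdi).symm (di m))) = di m
    rw [hm, Submodule.liftQ_apply]
    simp [LinearMap.sub_apply, map_sub, hdidq]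
  -- extend an arbitrary `φ : K →ₗ CharacterModule S` to `M` by transposing twice
  intro φ
  refine ⟨CharacterModule.transpose (s ∘ₗ CharacterModule.transpose φ), ?_⟩
  refine LinearMap.ext fun k => CharacterModule.ext _ fun a => ?_
  show s (CharacterModule.transpose φ a) (i k) = φ k a
  exact DFunLike.congr_fun (hs (CharacterModule.transpose φ a)) k

end Purity

/-- With `A = A' ×_{B'} B` the fiber product of `R`-algebras, `B'` flat over `R`,
and `(b, a') ↦ g b - f a'` surjective, for any `R`-algebra `S` the natural map
`A ⊗_R S → (A' ⊗_R S) ×_{B' ⊗_R S} (B ⊗_R S)` is an isomorphism, i.e. the base-changed map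
`A ⊗ S → (B ⊗ S) × (A' ⊗ S)` is injective with image exactly the fiber product. -/
theorem fiber_product_base_change
    (R A' B B' A S : Type*) [CommRing R]
    [CommRing A'] [CommRing B] [CommRing B'] [CommRing A] [CommRing S]
    [Algebra R A'] [Algebra R B] [Algebra R B'] [Algebra R A] [Algebra R S]
    (f : A' →ₐ[R] B') (g : B →ₐ[R] B')
    (p₁ : A →ₐ[R] B) (p₂ : A →ₐ[R] A')
    (hcomm : ∀ a : A, g (p₁ a) = f (p₂ a))
    (hfib : ∀ (b : B) (a' : A'), g b = f a' → ∃! a : A, p₁ a = b ∧ p₂ a = a')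
    [Module.Flat R B']
    (hsurj : Function.Surjective (fun x : B × A' => g x.1 - f x.2)) :
    Function.Injective (fun x : A ⊗[R] S =>
      (Algebra.TensorProduct.map p₁ (AlgHom.id R S) x,
       Algebra.TensorProduct.map p₂ (AlgHom.id R S) x)) ∧
    (∀ x : (B ⊗[R] S) × (A' ⊗[R] S),
      Algebra.TensorProduct.map g (AlgHom.id R S) x.1 =
        Algebra.TensorProduct.map f (AlgHom.id R S) x.2 ↔
      ∃ y : A ⊗[R] S,
        (Algebra.TensorProduct.map p₁ (AlgHom.id R S) y,
         Algebra.TensorProduct.map p₂ (AlgHom.id R S) y) = x) := by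
  classical
  set i : A →ₗ[R] B × A' := (p₁.toLinearMap).prod p₂.toLinearMap with hi_def
  set qm : (B × A') →ₗ[R] B' :=
    g.toLinearMap ∘ₗ LinearMap.fst R B A' - f.toLinearMap ∘ₗ LinearMap.snd R B A' with hqm_def
  have hi : Function.Injective i := by
    intro a a' h
    have h1 : p₁ a = p₁ a' := congrArg Prod.fst h
    have h2 : p₂ a = p₂ a' := congrArg Prod.snd h
    obtain ⟨a'', _, h3⟩ := hfib (p₁ a) (p₂ a) (hcomm a)
    exact (h3 a ⟨rfl, rfl⟩).trans (h3 a' ⟨h1.symm, h2.symm⟩).symm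
  have hq : Function.Surjective qm := by
    intro b'
    obtain ⟨x, hx⟩ := hsurj b'
    exact ⟨x, hx⟩
  have hex : Function.Exact i qm := by
    intro y
    constructor
    · intro hy
      have hy' : g y.1 = f y.2 := by
        have : g y.1 - f y.2 = 0 := hy
        rwa [sub_eq_zero] at this
      obtain ⟨a, ⟨ha1, ha2⟩, _⟩ := hfib y.1 y.2 hy'
      exact ⟨a, Prod.ext ha1 ha2⟩
    · rintro ⟨a, rfl⟩
      show g (p₁ a) - f (p₂ a) = 0
      rw [hcomm a, sub_self]
  have hinj : Function.Injective (i.rTensor S) :=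
    rTensor_injective_of_flat_cokernel i qm hi hq hex
  have hexT : Function.Exact (i.rTensor S) (qm.rTensor S) := rTensor_exact S hex hq
  set e := TensorProduct.prodLeft R R B A' S with he_def
  have key1 : ∀ x : A ⊗[R] S,
      e (i.rTensor S x) = (Algebra.TensorProduct.map p₁ (AlgHom.id R S) x,
        Algebra.TensorProduct.map p₂ (AlgHom.id R S) x) := by
    intro x
    induction x with
    | zero =>
        rw [map_zero, e.map_zero, map_zero, map_zero]
        rfl
    | tmul a s =>
        rw [LinearMap.rTensor_tmul]
        show e ((p₁ a, p₂ a) ⊗ₜ[R] s) = _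
        rw [he_def, TensorProduct.prodLeft_tmul]
        rfl
    | add x y hx hy =>
        rw [map_add, map_add, hx, hy, map_add, map_add]
        rfl
  have key2 : ∀ y : (B × A') ⊗[R] S,
      qm.rTensor S y = Algebra.TensorProduct.map g (AlgHom.id R S) (e y).1
        - Algebra.TensorProduct.map f (AlgHom.id R S) (e y).2 := by
    intro y
    induction y with
    | zero =>
        show (0 : B' ⊗[R] S) = Algebra.TensorProduct.map g (AlgHom.id R S) (e 0).1
          - Algebra.TensorProduct.map f (AlgHom.id R S) (e 0).2
        rw [map_zero]
        show (0 : B' ⊗[R] S) = Algebra.TensorProduct.map g (AlgHom.id R S) 0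
          - Algebra.TensorProduct.map f (AlgHom.id R S) 0
        rw [map_zero, map_zero, sub_zero]
    | tmul m s =>
        rw [LinearMap.rTensor_tmul]
        show (g m.1 - f m.2) ⊗ₜ[R] s = _
        rw [sub_tmul]
        have hm : e (m ⊗ₜ[R] s) = (m.1 ⊗ₜ[R] s, m.2 ⊗ₜ[R] s) := by
          cases m
          rw [he_def, TensorProduct.prodLeft_tmul]
        rw [hm]
        rfl
    | add x y hx hy =>
        rw [map_add, hx, hy, map_add e x y, Prod.fst_add, Prod.snd_add, map_add, map_add]
        abel
  constructor
  · intro x y hxy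
    apply hinj
    apply e.injective
    rw [key1, key1]
    exact hxy
  · intro x
    constructor
    · intro hgf
      have h0 : qm.rTensor S (e.symm x) = 0 := by
        rw [key2, e.apply_symm_apply, hgf, sub_self]
      obtain ⟨z, hz⟩ := (hexT (e.symm x)).mp h0
      refine ⟨z, ?_⟩
      rw [← key1 z, hz, e.apply_symm_apply]
    · rintro ⟨y, rfl⟩
      have h0 : qm.rTensor S (i.rTensor S y) = 0 := (hexT _).mpr ⟨y, rfl⟩
      rw [key2, key1] at h0
      exact sub_eq_zero.mp h0
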